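/- For every nonnegative integer n, the set ℱ^n of all assemblages (G, γ_0, Γ) with |V(G)| ≤ n is well-behaved. -/

import Mathlib

attribute [local instance] Classical.propDecidable

set_option maxHeartbeats 1000000

noncomputable section

universe u

/-- A finite graph, possibly with loops and parallel edges. -/
structure MGraph : Type 1 where
  V : Type
  E : Type
  [fintypeV : Fintype V]
  [fintypeE : Fintype E]
  [decEqV : DecidableEq V]
  [decEqE : DecidableEq E]
  ends : E → Sym2 V

attribute [instance] MGraph.fintypeV MGraph.fintypeE MGraph.decEqV MGraph.decEqE

namespace MGraph

variable {G : MGraph}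

/-- A walk in a multigraph. -/
inductive Walk (G : MGraph) : G.V → G.V → Type where
  | nil (v : G.V) : Walk G v v
  | cons {u v w : G.V} (e : G.E) (he : G.ends e = s(u, v)) (p : Walk G v w) : Walk G u w

namespace Walk

def vertList : ∀ {u v : G.V}, G.Walk u v → List G.V
  | _, _, .nil v => [v]
  | u, _, .cons _ _ p => u :: p.vertList

def edgeList : ∀ {u v : G.V}, G.Walk u v → List G.E
  | _, _, .nil _ => []
  | _, _, .cons e _ p => e :: p.edgeList

/-- A path is a walk with pairwise distinct vertices. -/
def IsPath {u v : G.V} (p : G.Walk u v) : Prop := p.vertList.Nodup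

/-- A cycle is a nontrivial closed walk whose vertices are pairwise distinct except that
the first and the last vertex coincide, and whose edges are pairwise distinct. -/
def IsCycle {u v : G.V} (p : G.Walk u v) : Prop :=
  u = v ∧ p.edgeList ≠ [] ∧ p.edgeList.Nodup ∧ p.vertList.tail.Nodup

/-- The internal vertices of a walk. -/
def internalVerts {u v : G.V} (p : G.Walk u v) : List G.V := p.vertList.tail.dropLast

end Walk

/-- A homeomorphic embedding from `H` to `G`: an injection on vertices together with
an assignment of paths (cycles, for loops) to the edges, internally disjoint from each other
and meeting the branch vertices only as prescribed. -/
structure HomEmb (H G : MGraph) where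
  vmap : H.V → G.V
  vinj : Function.Injective vmap
  esrc : H.E → G.V
  etgt : H.E → G.V
  emap : ∀ e : H.E, G.Walk (esrc e) (etgt e)
  ends_eq : ∀ e : H.E, s(esrc e, etgt e) = (H.ends e).map vmap
  is_path : ∀ e : H.E, ¬ (H.ends e).IsDiag → (emap e).IsPath
  is_cycle : ∀ e : H.E, (H.ends e).IsDiag → (emap e).IsCycle
  edge_disjoint : ∀ e₁ e₂ : H.E, e₁ ≠ e₂ → ∀ x : G.V,
    x ∈ (emap e₁).vertList → x ∈ (emap e₂).vertList →
    ∃ v : H.V, vmap v = x ∧ v ∈ H.ends e₁ ∧ v ∈ H.ends e₂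
  vert_cond : ∀ (v : H.V) (e : H.E), vmap v ∈ (emap e).vertList → v ∈ H.ends e

/-- `G` contains `H` as a topological minor. -/
def TopMinor (H G : MGraph) : Prop := Nonempty (HomEmb H G)

/-- The subgraph of `G` induced by a set `S` of vertices. -/
def induce (G : MGraph) (S : Set G.V) : MGraph where
  V := S
  E := {e : G.E // ∀ v ∈ G.ends e, v ∈ S}
  ends := fun e => (G.ends e.1).attachWith e.2

/-- A walk from `u` to `v` all whose vertices lie in `S` and all whose edges lie in `F`. -/
def ReachSub (G : MGraph) (S : Set G.V) (F : Set G.E) (u v : G.V) : Prop :=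
  u ∈ S ∧ v ∈ S ∧ ∃ p : G.Walk u v, (∀ x ∈ p.vertList, x ∈ S) ∧ (∀ e ∈ p.edgeList, e ∈ F)

/-- `G` contains `H` as a minor: there are pairwise disjoint branch sets, connected via
a reserved set `F` of edges, and an injection of the edges of `H` into the non-reserved
edges of `G` joining the corresponding branch sets. -/
def MinorOf (H G : MGraph) : Prop :=
  ∃ (Bset : H.V → Set G.V) (F : Set G.E) (π : H.E → G.E),
    (∀ v w : H.V, v ≠ w → Disjoint (Bset v) (Bset w)) ∧
    (∀ e ∈ F, ∃ v : H.V, ∀ x ∈ G.ends e, x ∈ Bset v) ∧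
    (∀ v : H.V, (Bset v).Nonempty ∧ ∀ x ∈ Bset v, ∀ y ∈ Bset v, ReachSub G (Bset v) F x y) ∧
    Function.Injective π ∧ (∀ e, π e ∉ F) ∧
    (∀ (e : H.E) (u v : H.V), H.ends e = s(u, v) →
      ∃ x ∈ Bset u, ∃ y ∈ Bset v, G.ends (π e) = s(x, y))

end MGraph

/-- The Robertson chain of length `k`: a path of length `k` with every edge duplicated. -/
def RobertsonChain (k : ℕ) : MGraph where
  V := Fin (k+1)
  E := Fin k × Fin 2
  ends := fun e => s(e.1.castSucc, e.1.succ)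

/-- A drawing of a graph in the plane with no edge crossings: vertices are distinct points,
edges are arcs joining the points corresponding to their ends, the interior of an arc meets
no other arc and no vertex point. -/
structure PlaneDrawing (G : MGraph) where
  pos : G.V → ℝ × ℝ
  posInj : Function.Injective pos
  arc : G.E → ℝ → ℝ × ℝ
  arc_cont : ∀ e, ContinuousOn (arc e) (Set.Icc 0 1)
  arc_ends : ∀ e, s(arc e 0, arc e 1) = (G.ends e).map pos
  arc_injOn : ∀ e, Set.InjOn (arc e) (Set.Ico 0 1)
  arc_avoid_vert : ∀ e, ∀ t ∈ Set.Ioo (0:ℝ) 1, ∀ v, arc e t ≠ pos v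
  arc_no_cross : ∀ e₁ e₂, e₁ ≠ e₂ → ∀ t₁ ∈ Set.Ioo (0:ℝ) 1, ∀ t₂ ∈ Set.Icc (0:ℝ) 1,
    arc e₁ t₁ ≠ arc e₂ t₂

/-- A graph is planar if it can be embedded in the plane with no edge-crossing. -/
def MGraph.Planar (G : MGraph) : Prop := Nonempty (PlaneDrawing G)

end

noncomputable section

namespace MGraph
variable (G : MGraph)

/-- A separation of `G`. -/
def IsSep (A B : Set G.V) : Prop :=
  A ∪ B = Set.univ ∧
  ∀ e : G.E, ¬ ((∃ u ∈ G.ends e, u ∈ A \ B) ∧ (∃ v ∈ G.ends e, v ∈ B \ A))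

/-- The edges joining `v` to the set `S`. -/
def edgesFromTo (v : G.V) (S : Set G.V) : Set G.E := {e | ∃ u ∈ S, G.ends e = s(v, u)}

/-- `v ∈ A ∩ B` is pointed for `(A, B)`. -/
def Pointed (A B : Set G.V) (v : G.V) : Prop := (G.edgesFromTo v (A \ B)).ncard ≤ 1

/-- `v ∈ A ∩ B` is anti-pointed for `(A, B)`. -/
def AntiPointed (A B : Set G.V) (v : G.V) : Prop := (G.edgesFromTo v (B \ A)).ncard ≤ 1

/-- A pseudo-edge-cut modulo `Z`. -/
def PseudoEC (A B : Set G.V) (Z : Set G.V) : Prop :=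
  G.IsSep A B ∧ ∀ v ∈ (A ∩ B) \ Z, G.Pointed A B v

/-- The thickness of a separation. -/
def thickness (A B : Set G.V) : ℕ := {v | v ∈ A ∩ B ∧ ¬ G.Pointed A B v}.ncard

/-- The breadth of a separation. -/
def breadth (A B : Set G.V) : ℕ × ℕ := ((A ∩ B).ncard, G.thickness A B)

/-- `(A, B)` separates `X` and `Y`. -/
def Separates (A B X Y : Set G.V) : Prop :=
  ¬ (X ⊆ A ∩ B ∧ Y ⊆ A ∩ B) ∧ ((X ⊆ A ∧ Y ⊆ B) ∨ (X ⊆ B ∧ Y ⊆ A))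

/-- `(A, B)` strongly separates `U` and `W`. -/
def StronglySeparates (A B U W : Set G.V) : Prop :=
  U ⊆ A ∧ W ⊆ B ∧ ∀ x ∈ (A ∩ B) \ (U ∩ W), G.Pointed A B x ∧ x ∉ U

/-- There exist `n` pairwise disjoint paths in `G` from `X` to `Y`. -/
def LinkedSets (n : ℕ) (X Y : Set G.V) : Prop :=
  ∃ (a b : Fin n → G.V) (P : ∀ i, G.Walk (a i) (b i)),
    (∀ i, (P i).IsPath) ∧ (∀ i, a i ∈ X) ∧ (∀ i, b i ∈ Y) ∧
    ∀ i j, i ≠ j → ∀ x, x ∈ (P i).vertList → x ∉ (P j).vertList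

end MGraph

/-- `(A, B)` weakly separates `X` and `Y`. -/
def WeaklySeparates {α : Type} (A B X Y : Set α) : Prop :=
  (X ⊆ A ∧ Y ⊆ B) ∨ (X ⊆ B ∧ Y ⊆ A)

/-- Lexicographic comparison of breadths. -/
def breadthLE (p q : ℕ × ℕ) : Prop := p.1 < q.1 ∨ (p.1 = q.1 ∧ p.2 ≤ q.2)

def breadthLT (p q : ℕ × ℕ) : Prop := p.1 < q.1 ∨ (p.1 = q.1 ∧ p.2 < q.2)

/-- `u` is an ancestor of `v` (in a rooted tree given by its parent function). -/
def IterAnc {τ : Type} (parent : τ → τ) (u v : τ) : Prop := ∃ n : ℕ, parent^[n] v = u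

/-- `t` lies on the path of the tree between `t₁` and `t₂`. -/
def OnTreePathP {τ : Type} (parent : τ → τ) (t₁ t₂ t : τ) : Prop :=
  (IterAnc parent t t₁ ∨ IterAnc parent t t₂) ∧
  ∀ s, IterAnc parent s t₁ → IterAnc parent s t₂ → IterAnc parent s t

/-- The edge of the rooted tree with head `v` lies on the directed path from `a` to `b`. -/
def EdgeOnPathP {τ : Type} (parent : τ → τ) (a b v : τ) : Prop :=
  IterAnc parent a v ∧ v ≠ a ∧ IterAnc parent v b

/-- Generic precursor relation. -/
def PrecursorP {τ X : Type} (parent : τ → τ) (bag : τ → Set X) (t₁ t₂ : τ) : Prop :=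
  t₁ ≠ t₂ ∧ IterAnc parent t₁ t₂ ∧ (bag t₁).ncard = (bag t₂).ncard ∧
  ∀ t, IterAnc parent t₁ t → IterAnc parent t t₂ → (bag t₁).ncard ≤ (bag t).ncard

/-- A tree-decomposition of a multigraph. -/
structure TreeDecompU (G : MGraph) where
  τ : Type
  [fτ : Fintype τ]
  [dτ : DecidableEq τ]
  [nτ : Nonempty τ]
  T : SimpleGraph τ
  tree : T.IsTree
  bag : τ → Set G.V
  covers : ∀ v : G.V, ∃ t, v ∈ bag t
  edge_bag : ∀ e : G.E, ∃ t, ∀ v ∈ G.ends e, v ∈ bag t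
  bag_conn : ∀ v : G.V, ((SimpleGraph.induce {t | v ∈ bag t} T).Connected)

attribute [instance] TreeDecompU.fτ TreeDecompU.dτ TreeDecompU.nτ

/-- `G` has tree-width at most `w`. -/
def MGraph.TreewidthLE (G : MGraph) (w : ℕ) : Prop :=
  ∃ D : TreeDecompU G, ∀ t, (D.bag t).ncard ≤ w + 1

/-- The tree-width of `G`. -/
def MGraph.tw (G : MGraph) : ℕ := sInf {w | G.TreewidthLE w}

/-- A rooted tree-decomposition of a multigraph, the rooted tree being given by its
parent function. -/
structure RootedTD (G : MGraph) where
  τ : Type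
  [fτ : Fintype τ]
  [dτ : DecidableEq τ]
  root : τ
  parent : τ → τ
  parent_root : parent root = root
  reaches : ∀ t, ∃ n : ℕ, parent^[n] t = root
  bag : τ → Set G.V
  covers : ∀ v : G.V, ∃ t, v ∈ bag t
  edge_bag : ∀ e : G.E, ∃ t, ∀ v ∈ G.ends e, v ∈ bag t
  bag_conn : ∀ (v : G.V) (t₁ t₂ t : τ), v ∈ bag t₁ → v ∈ bag t₂ →
    OnTreePathP parent t₁ t₂ t → v ∈ bag t

attribute [instance] RootedTD.fτ RootedTD.dτ

namespace RootedTD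

variable {G : MGraph} (D : RootedTD G)

def Anc (t₁ t₂ : D.τ) : Prop := IterAnc D.parent t₁ t₂

/-- `↑t`. -/
def up (t : D.τ) : Set G.V := {v | ∃ s, IterAnc D.parent t s ∧ v ∈ D.bag s}

/-- `↓t`. -/
def down (t : D.τ) : Set G.V :=
  {v | v ∈ D.bag t ∨ ∃ s, ¬ IterAnc D.parent t s ∧ v ∈ D.bag s}

def Precursor (t₁ t₂ : D.τ) : Prop := PrecursorP D.parent D.bag t₁ t₂

/-- The width of a rooted tree-decomposition. -/
def width : ℕ := (Finset.univ.sup fun t : D.τ => (D.bag t).ncard) - 1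

/-- `c` is a child of `t`. -/
def ChildOf (c t : D.τ) : Prop := D.parent c = t ∧ c ≠ t

end RootedTD

/-- Generic notion of a `(Z, s)`-strip of length `h+1`, parametrized over the
pseudo-edge-cut predicate used for its third condition. -/
def IsStripGen {τ : Type} {G : MGraph} (parent : τ → τ) (bag : τ → Set G.V)
    (PEC : τ → Prop) (Z : Set G.V) (s : ℕ) {h : ℕ} (t : Fin (h+1) → τ) : Prop :=
  (∀ i : Fin h, PrecursorP parent bag (t i.castSucc) (t i.succ)) ∧
  (∀ i, Z ⊆ bag (t i)) ∧
  (∀ i, (bag (t i) \ Z).ncard = s) ∧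
  (∀ i, (bag (t i) \ Z).Nonempty) ∧
  (∀ i j, i ≠ j → Disjoint (bag (t i) \ Z) (bag (t j) \ Z)) ∧
  (∀ u, IterAnc parent (t 0) u → IterAnc parent u (t (Fin.last h)) →
    (bag u).ncard = (bag (t 0)).ncard → ¬ PEC u) ∧
  G.LinkedSets (bag (t 0)).ncard (bag (t 0)) (bag (t (Fin.last h)))

namespace RootedTD

variable {G : MGraph} (D : RootedTD G)

/-- A `(Z, s)`-strip in a rooted tree-decomposition. -/
def IsStrip (Z : Set G.V) (s : ℕ) {h : ℕ} (t : Fin (h+1) → D.τ) : Prop :=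
  IsStripGen D.parent D.bag (fun u => G.PseudoEC (D.down u) (D.up u) Z) Z s t

/-- A separation `(A, B)` `α`-breaks a strip. -/
def Breaks {h : ℕ} (t : Fin (h+1) → D.τ) (α : ℕ) (A B : Set G.V) : Prop :=
  ∃ (ii jj : Fin α → Fin (h+1)) (hα : 0 < α), StrictMono ii ∧ StrictMono jj ∧
    (∀ a b, ii a < jj b) ∧
    D.down (t (ii ⟨α - 1, by omega⟩)) ⊆ A ∧ D.up (t (jj ⟨0, hα⟩)) ⊆ B

/-- `D` is `N`-linked. -/
def NLinked (N : ℕ) : Prop :=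
  ∀ t₁ t₂ : D.τ, D.Precursor t₁ t₂ →
    N ≤ {v : G.V | v ∈ D.up t₂ ∧ ∀ u : D.τ, (D.bag u).ncard < (D.bag t₁).ncard →
          ¬ G.Separates (D.down u) (D.up u) (D.down t₁) {v}}.ncard →
    ¬ ∃ A B : Set G.V, G.IsSep A B ∧ (A ∩ B).ncard < (D.bag t₁).ncard ∧
        D.down t₁ ⊆ A ∧ D.up t₂ ⊆ B

/-- The elevation of `D` is at most `d`. -/
def ElevationLE (d : ℕ) : Prop :=
  ∀ (Z : Set G.V) (s : ℕ), 0 < s → ∀ (h : ℕ) (t : Fin (h+1) → D.τ),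
    D.IsStrip Z s t → h + 1 ≤ d

/-- A witness set for `(A, B)` being incorporated in `D` (conditions (INC1)-(INC3)). -/
def IncWitness (A B : Set G.V) (S : Finset D.τ) : Prop :=
  (∀ t ∈ S, breadthLE (G.breadth (D.down t) (D.up t)) (G.breadth A B)) ∧
  (B = ⋃ t ∈ (S : Set D.τ), D.up t) ∧
  (∑ t ∈ S, 2 ^ ((D.down t ∩ D.up t).ncard ^ 2 + G.thickness (D.down t) (D.up t))
      ≤ 2 ^ ((A ∩ B).ncard ^ 2 + G.thickness A B))

/-- `(A, B)` is incorporated in `D`. -/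
def Incorporated (A B : Set G.V) : Prop := ∃ S : Finset D.τ, D.IncWitness A B S

/-- `v ∈ X_{t₁} ∩ X_{t₂}` is coherent for `t₁, t₂`. -/
def Coherent (t₁ t₂ : D.τ) (v : G.V) : Prop :=
  (¬ G.Pointed (D.down t₁) (D.up t₁) v ∨
    ∃ i : ℕ, i ≤ 1 ∧ (G.edgesFromTo v (D.down t₁ \ D.up t₁)).ncard = i ∧
      (G.edgesFromTo v (D.down t₂ \ D.up t₂)).ncard = i) ∧
  (¬ G.AntiPointed (D.down t₂) (D.up t₂) v ∨
    ∃ i : ℕ, i ≤ 1 ∧ (G.edgesFromTo v (D.up t₁ \ D.down t₁)).ncard = i ∧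
      (G.edgesFromTo v (D.up t₂ \ D.down t₂)).ncard = i)

/-- `D` is `N`-integrated. -/
def NIntegrated (N : ℕ) : Prop :=
  ∀ t : Fin 4 → D.τ,
    (∀ i : Fin 3, D.Anc (t i.castSucc) (t i.succ)) →
    (∀ i, (D.bag (t i)).ncard = (D.bag (t 0)).ncard) →
    G.LinkedSets (D.bag (t 0)).ncard (D.bag (t 0)) (D.bag (t 3)) →
    (∀ i j, i < j → D.bag (t i) ∩ D.bag (t j) = ⋂ ℓ, D.bag (t ℓ)) →
    (∀ v ∈ ⋂ ℓ, D.bag (t ℓ), D.Coherent (t 0) (t 3) v) →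
    ∀ A B : Set G.V, G.IsSep A B →
      G.StronglySeparates A B (D.down (t 1)) (D.up (t 2)) →
      G.breadth A B = ((D.bag (t 1)).ncard,
        {v | v ∈ D.bag (t 0) ∩ D.bag (t 3) ∧
             ¬ G.Pointed (D.down (t 3)) (D.up (t 3)) v}.ncard) →
      N ≤ {v : G.V | v ∈ D.up (t 3) ∧ ∀ u : D.τ,
            breadthLT (G.breadth (D.down u) (D.up u)) (G.breadth A B) →
            ¬ G.Separates (D.down u) (D.up u) (D.down (t 0)) {v}}.ncard →
      ∃ u : D.τ, D.Anc (t 0) u ∧ D.Anc u (t 3) ∧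
        G.breadth (D.down u) (D.up u) = G.breadth A B

end RootedTD

/-- The number of separations of breadth `(i, j)` incorporated in `D`. -/
def sigCount {G : MGraph} (D : RootedTD G) (i j : ℕ) : ℕ :=
  {p : Set G.V × Set G.V | G.IsSep p.1 p.2 ∧ G.breadth p.1 p.2 = (i, j) ∧
    D.Incorporated p.1 p.2}.ncard

/-- The signature of `D'` is greater than the signature of `D`. -/
def SigGreater {G : MGraph} (D D' : RootedTD G) : Prop :=
  ∃ i j : ℕ, j ≤ i ∧ i ≤ Fintype.card G.V ∧
    (∀ i' j' : ℕ, j' ≤ i' → (i' < i ∨ (i' = i ∧ j' < j)) →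
      sigCount D i' j' = sigCount D' i' j') ∧
    sigCount D i j < sigCount D' i j

end
noncomputable section

/-- A subgraph of `G`, given by its vertex set and edge set. -/
def SubPair (G : MGraph) : Type := Set G.V × Set G.E

/-- The component of the subgraph `(S, F)` containing `v`. -/
def componentSub (G : MGraph) (S : Set G.V) (F : Set G.E) (v : G.V) : SubPair G :=
  ({x | MGraph.ReachSub G S F v x}, {e | e ∈ F ∧ ∀ x ∈ G.ends e, MGraph.ReachSub G S F v x})

/-- The number of components of the subgraph `(S, F)`. -/
def numComp (G : MGraph) (S : Set G.V) (F : Set G.E) : ℕ :=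
  {C : Set G.V | ∃ u ∈ S, C = {v | MGraph.ReachSub G S F u v}}.ncard

/-- `v` is a cut-vertex of the subgraph `(S, F)`. -/
def IsCutVert (G : MGraph) (S : Set G.V) (F : Set G.E) (v : G.V) : Prop :=
  v ∈ S ∧ numComp G S F < numComp G (S \ {v}) F

def IsSubgraphOf (G : MGraph) (p q : SubPair G) : Prop := p.1 ⊆ q.1 ∧ p.2 ⊆ q.2

def EdgeClosed (G : MGraph) (p : SubPair G) : Prop := ∀ e ∈ p.2, ∀ v ∈ G.ends e, v ∈ p.1

def ConnectedSub (G : MGraph) (p : SubPair G) : Prop :=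
  p.1.Nonempty ∧ ∀ u ∈ p.1, ∀ v ∈ p.1, MGraph.ReachSub G p.1 p.2 u v

/-- A block of the subgraph `(S, F)`: a maximal connected subgraph with no cut-vertex. -/
def IsBlock (G : MGraph) (S : Set G.V) (F : Set G.E) (b : SubPair G) : Prop :=
  IsSubgraphOf G b (S, F) ∧ EdgeClosed G b ∧ ConnectedSub G b ∧
  (∀ v, ¬ IsCutVert G b.1 b.2 v) ∧
  ∀ b' : SubPair G, IsSubgraphOf G b' (S, F) → EdgeClosed G b' → ConnectedSub G b' →
    (∀ v, ¬ IsCutVert G b'.1 b'.2 v) → IsSubgraphOf G b b' → b = b'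

/-- Adjacency of the block-cutvertex incidence graph of the subgraph `(S, F)`. -/
def bcAdj (G : MGraph) (S : Set G.V) (F : Set G.E) :
    (SubPair G ⊕ G.V) → (SubPair G ⊕ G.V) → Prop
  | Sum.inl b, Sum.inr v => IsBlock G S F b ∧ IsCutVert G S F v ∧ v ∈ b.1
  | Sum.inr v, Sum.inl b => IsBlock G S F b ∧ IsCutVert G S F v ∧ v ∈ b.1
  | _, _ => False

/-- The block-cutvertex incidence graph (whose "block tree" components realize the
block trees of the components of `(S, F)`). -/
def bcGraph (G : MGraph) (S : Set G.V) (F : Set G.E) : SimpleGraph (SubPair G ⊕ G.V) where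
  Adj := bcAdj G S F
  symm := by
    refine ⟨fun x y h => ?_⟩
    cases x <;> cases y <;> simp_all [bcAdj]
  loopless := by
    refine ⟨fun x h => ?_⟩
    cases x <;> simp_all [bcAdj]

/-- The block `B` lies on the block-tree path between the blocks `B₁` and `B₂`. -/
def OnBlockPath (G : MGraph) (S : Set G.V) (F : Set G.E) (B₁ B₂ B : SubPair G) : Prop :=
  IsBlock G S F B ∧
  Nonempty ((bcGraph G S F).Walk (Sum.inl B₁) (Sum.inl B₂)) ∧
  ∀ p : (bcGraph G S F).Walk (Sum.inl B₁) (Sum.inl B₂), Sum.inl B ∈ p.support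

/-- The graph that is the path of blocks of `(S, F)` from `B₁` to `B₂`. -/
def pathOfBlocks (G : MGraph) (S : Set G.V) (F : Set G.E) (B₁ B₂ : SubPair G) : SubPair G :=
  ({v | ∃ B, OnBlockPath G S F B₁ B₂ B ∧ v ∈ B.1},
   {e | ∃ B, OnBlockPath G S F B₁ B₂ B ∧ e ∈ B.2})

/-- The block of `(S, F)` containing an edge of `E₀`. -/
def blockThrough (G : MGraph) (S : Set G.V) (F : Set G.E) (E₀ : Set G.E) : SubPair G :=
  ({v | ∃ B, IsBlock G S F B ∧ (∃ e ∈ E₀, e ∈ B.2) ∧ v ∈ B.1},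
   {e' | ∃ B, IsBlock G S F B ∧ (∃ e ∈ E₀, e ∈ B.2) ∧ e' ∈ B.2})

/-- A family of `n` walks in `G`. -/
structure PathFamily (G : MGraph) (n : ℕ) where
  a : Fin n → G.V
  b : Fin n → G.V
  P : ∀ i, G.Walk (a i) (b i)

namespace PathFamily

variable {G : MGraph} {n : ℕ}

/-- The vertices of the members other than the `i₀`-th one. -/
def others (Fam : PathFamily G n) (i₀ : Fin n) : Set G.V :=
  {x | ∃ j, j ≠ i₀ ∧ x ∈ (Fam.P j).vertList}

/-- The vertices of all members. -/
def allVerts (Fam : PathFamily G n) : Set G.V := {x | ∃ j, x ∈ (Fam.P j).vertList}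

end PathFamily

/-- The data of the segment of the member `P i₀` of a path family between two of its
vertices `v₁, v₂`; its first and last edges are "the edges of `P` incident with
`v₁` and `v₂`" used in the definition of the graphs `Q`, `L` and `R`. -/
structure SegConfig (G : MGraph) {n : ℕ} (Fam : PathFamily G n) (i₀ : Fin n)
    (v₁ v₂ : G.V) where
  seg : G.Walk v₁ v₂
  sub_v : seg.vertList.IsInfix (Fam.P i₀).vertList
  sub_e : seg.edgeList.IsInfix (Fam.P i₀).edgeList
  nontriv : seg.edgeList ≠ []

namespace SegConfig

variable {G : MGraph} {n : ℕ} {Fam : PathFamily G n} {i₀ : Fin n} {v₁ v₂ : G.V}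

/-- The vertex set of `G − ⋃_{W ∈ 𝒫 − {P}} V(W)`. -/
def delS (_ : SegConfig G Fam i₀ v₁ v₂) : Set G.V := Set.univ \ Fam.others i₀

/-- The edge set of `G − ⋃_{W ∈ 𝒫 − {P}} V(W)`. -/
def delF (cfg : SegConfig G Fam i₀ v₁ v₂) : Set G.E :=
  {e | ∀ x ∈ G.ends e, x ∈ cfg.delS}

/-- The block `B₁` containing the edge of `P` incident with `v₁`. -/
def B1 (cfg : SegConfig G Fam i₀ v₁ v₂) : SubPair G :=
  blockThrough G cfg.delS cfg.delF {e | cfg.seg.edgeList.head? = some e}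

/-- The block `B₂` containing the edge of `P` incident with `v₂`. -/
def B2 (cfg : SegConfig G Fam i₀ v₁ v₂) : SubPair G :=
  blockThrough G cfg.delS cfg.delF {e | cfg.seg.edgeList.getLast? = some e}

/-- The `(Q, 𝒫, P)`-graph. -/
def Qgraph (cfg : SegConfig G Fam i₀ v₁ v₂) : SubPair G :=
  pathOfBlocks G cfg.delS cfg.delF cfg.B1 cfg.B2

/-- The edges of the single-edge blocks of the path of blocks. -/
def singles (cfg : SegConfig G Fam i₀ v₁ v₂) : Set G.E :=
  {e' | ∃ B, OnBlockPath G cfg.delS cfg.delF cfg.B1 cfg.B2 B ∧ (∃ e₀, B.2 = {e₀}) ∧ e' ∈ B.2}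

/-- The `(L, 𝒫, P)`-graph. -/
def Lgraph (cfg : SegConfig G Fam i₀ v₁ v₂) : SubPair G :=
  if ∀ B, OnBlockPath G cfg.delS cfg.delF cfg.B1 cfg.B2 B → ¬ ∃ e₀, B.2 = {e₀}
  then cfg.Qgraph
  else componentSub G cfg.Qgraph.1 (cfg.Qgraph.2 \ cfg.singles) v₁

/-- The `(R, 𝒫, P)`-graph. -/
def Rgraph (cfg : SegConfig G Fam i₀ v₁ v₂) : SubPair G :=
  if ∀ B, OnBlockPath G cfg.delS cfg.delF cfg.B1 cfg.B2 B → ¬ ∃ e₀, B.2 = {e₀}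
  then cfg.Qgraph
  else componentSub G cfg.Qgraph.1 (cfg.Qgraph.2 \ cfg.singles) v₂

end SegConfig

/-- Two edge-disjoint paths from `x` to `y` avoiding `avoid` and internally
disjoint from `intAvoid`. -/
def TwoEdgeDisjointPaths (G : MGraph) (x y : G.V) (avoid intAvoid : Set G.V) : Prop :=
  ∃ (p q : G.Walk x y), p.IsPath ∧ q.IsPath ∧
    (∀ z ∈ p.vertList, z ∉ avoid) ∧ (∀ z ∈ q.vertList, z ∉ avoid) ∧
    (∀ z ∈ p.internalVerts, z ∉ intAvoid) ∧ (∀ z ∈ q.internalVerts, z ∉ intAvoid) ∧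
    ∀ e ∈ p.edgeList, e ∉ q.edgeList

section TreeSets

/-- `s` is an internal node of the path between `t₁` and `t₂`. -/
def interiorNodeU {G : MGraph} (D : TreeDecompU G) (t₁ t₂ s : D.τ) : Prop :=
  s ≠ t₁ ∧ s ≠ t₂ ∧ ∀ p : D.T.Walk t₁ t₂, s ∈ p.support

/-- reachability in the tree avoiding the set `R`. -/
def reachAvoidU {G : MGraph} (D : TreeDecompU G) (R : Set D.τ) (a b : D.τ) : Prop :=
  a ∉ R ∧ b ∉ R ∧ ∃ p : D.T.Walk a b, ∀ x ∈ p.support, x ∉ R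

/-- The vertex set of the graph `G'` used for jumps: the subgraph induced by
`X_{t₁} ∪ X_{t₂}` together with the bags of the component of `T − {t₁, t₂}`
containing an internal node of the `t₁`–`t₂` path. -/
def GsetU {G : MGraph} (D : TreeDecompU G) (t₁ t₂ : D.τ) : Set G.V :=
  D.bag t₁ ∪ D.bag t₂ ∪
  {v | ∃ u s, interiorNodeU D t₁ t₂ s ∧ reachAvoidU D {t₁, t₂} s u ∧ v ∈ D.bag u}

/-- reachability in the underlying tree of a rooted tree, avoiding the set `R`. -/
def rReachAvoid {τ : Type} (parent : τ → τ) (R : Set τ) (a b : τ) : Prop :=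
  a ∉ R ∧ b ∉ R ∧
  Relation.ReflTransGen
    (fun x y => x ∉ R ∧ y ∉ R ∧ x ≠ y ∧ (parent x = y ∨ parent y = x)) a b

/-- The vertex set of the graph `G'` used for parent-side and child-side jumps. -/
def GsetR {G : MGraph} (D : RootedTD G) (t' t : D.τ) : Set G.V :=
  D.bag t' ∪ D.bag t ∪
  {v | ∃ u s, OnTreePathP D.parent t' t s ∧ s ≠ t' ∧ s ≠ t ∧
        rReachAvoid D.parent {t', t} s u ∧ v ∈ D.bag u}

end TreeSets

/-- A right jump from `v₁` (with respect to a path family `𝒫`, a member `P i₀` and the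
segment configuration between `X_{t₁}` and `X_{t₂}`). -/
def RightJumpU {G : MGraph} (D : TreeDecompU G) (t₁ t₂ : D.τ) {n : ℕ}
    (Fam : PathFamily G n) (i₀ : Fin n) {v₁ v₂ : G.V}
    (cfg : SegConfig G Fam i₀ v₁ v₂) {x y : G.V} (p : G.Walk x y) : Prop :=
  p.IsPath ∧ (∀ z ∈ p.vertList, z ∈ GsetU D t₁ t₂) ∧
  x ∈ cfg.Lgraph.1 ∧ y ∈ Fam.others i₀ ∧
  ∀ z ∈ p.internalVerts, z ∉ cfg.Lgraph.1 ∧ z ∉ Fam.allVerts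

/-- A left jump from `v₂`. -/
def LeftJumpU {G : MGraph} (D : TreeDecompU G) (t₁ t₂ : D.τ) {n : ℕ}
    (Fam : PathFamily G n) (i₀ : Fin n) {v₁ v₂ : G.V}
    (cfg : SegConfig G Fam i₀ v₁ v₂) {x y : G.V} (p : G.Walk x y) : Prop :=
  p.IsPath ∧ (∀ z ∈ p.vertList, z ∈ GsetU D t₁ t₂) ∧
  x ∈ cfg.Rgraph.1 ∧ y ∈ Fam.others i₀ ∧
  ∀ z ∈ p.internalVerts, z ∉ cfg.Rgraph.1 ∧ z ∉ Fam.allVerts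

/-- A parent-side jump at `t` with respect to `t'`. -/
def ParentJump {G : MGraph} (D : RootedTD G) (t' t : D.τ) {n : ℕ}
    (Fam : PathFamily G n) (i₀ : Fin n) {v₁ v₂ : G.V}
    (cfg : SegConfig G Fam i₀ v₁ v₂) {x y : G.V} (p : G.Walk x y) : Prop :=
  p.IsPath ∧ (∀ z ∈ p.vertList, z ∈ GsetR D t' t) ∧
  x ∈ cfg.Rgraph.1 ∧ y ∈ Fam.others i₀ ∧ y ∉ D.bag t' ∩ D.bag t ∧
  ∀ z ∈ p.internalVerts, z ∉ cfg.Rgraph.1 ∧ z ∉ Fam.allVerts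

/-- A child-side jump at `t'` with respect to `t`. -/
def ChildJump {G : MGraph} (D : RootedTD G) (t' t : D.τ) {n : ℕ}
    (Fam : PathFamily G n) (i₀ : Fin n) {v₁ v₂ : G.V}
    (cfg : SegConfig G Fam i₀ v₁ v₂) {x y : G.V} (p : G.Walk x y) : Prop :=
  p.IsPath ∧ (∀ z ∈ p.vertList, z ∈ GsetR D t' t) ∧
  x ∈ cfg.Lgraph.1 ∧ y ∈ Fam.others i₀ ∧ y ∉ D.bag t' ∩ D.bag t ∧
  ∀ z ∈ p.internalVerts, z ∉ cfg.Lgraph.1 ∧ z ∉ Fam.allVerts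

end
noncomputable section

/-- A quasi-order: a set with a reflexive and transitive relation. -/
structure QuasiOrder : Type 1 where
  carrier : Type
  le : carrier → carrier → Prop
  refl : ∀ a, le a a
  trans : ∀ a b c, le a b → le b c → le a c

/-- A quasi-order is a well-quasi-order if every infinite sequence has a
nondecreasing pair. -/
def QuasiOrder.IsWQO (Q : QuasiOrder) : Prop :=
  ∀ f : ℕ → Q.carrier, ∃ i j : ℕ, i < j ∧ Q.le (f i) (f j)

/-- A finite rooted tree, given by its parent function. -/
structure RTree : Type 1 where
  V : Type
  [fv : Fintype V]
  [dv : DecidableEq V]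
  root : V
  parent : V → V
  parent_root : parent root = root
  reaches : ∀ v, ∃ n : ℕ, parent^[n] v = root

attribute [instance] RTree.fv RTree.dv

namespace RTree

/-- We identify an edge of a rooted tree with its head (a non-root node);
`EBefore v w` says that the edge with head `v` strictly precedes the edge with head `w`
on a directed path. -/
def EBefore (T : RTree) (v w : T.V) : Prop :=
  v ≠ T.root ∧ w ≠ T.root ∧ IterAnc T.parent v (T.parent w)

/-- The edge with head `v` lies on the directed path from `a` to `b`. -/
def EOnPath (T : RTree) (a b v : T.V) : Prop :=
  v ≠ T.root ∧ IterAnc T.parent a v ∧ v ≠ a ∧ IterAnc T.parent v b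

/-- There is a directed path of length `ℓ` in `T`. -/
def HasDirPathLen (T : RTree) (ℓ : ℕ) : Prop :=
  ∃ a b : T.V, (T.parent)^[ℓ] b = a ∧ ∀ j < ℓ, (T.parent)^[j] b ≠ a

end RTree

/-- `v` precedes `w` in `T` with respect to `(φ, τ, μ)` (functions on edges being
identified with functions on non-root nodes via heads). -/
def Precedes {L : Type} (T : RTree) (φ τm : T.V → Finset L) (μ : T.V → ℕ)
    (v w : T.V) : Prop :=
  v ≠ T.root ∧ w ≠ T.root ∧ IterAnc T.parent v w ∧
  (φ v).card = (φ w).card ∧ τm v = τm w ∧ μ v = μ w ∧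
  (∀ g, T.EOnPath v w g → (φ w).card ≤ (φ g).card) ∧
  (∀ g, T.EOnPath v w g → (φ g).card = (φ v).card → μ v ≤ μ g)

/-- `(T, φ, τ, μ)` is `(n, m, N)`-decorated. -/
def Decorated {L : Type} (T : RTree) (φ τm : T.V → Finset L) (μ : T.V → ℕ)
    (n m N : ℕ) : Prop :=
  (∀ v : T.V, v ≠ T.root → (φ v).card ≤ n ∧ τm v ⊆ φ v ∧ μ v ≤ N) ∧
  (∀ e e' e'' : T.V, T.EBefore e e' → T.EBefore e' e'' → φ e ∩ φ e'' ⊆ φ e') ∧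
  (∀ (t : ℕ) (ht : 0 < t) (a b : T.V), IterAnc T.parent a b →
    ∀ es : Fin t → T.V,
      (∀ i, T.EOnPath a b (es i)) →
      (∀ i j : Fin t, i < j → T.EBefore (es i) (es j)) →
      (∀ i, (φ (es i)).card = (φ (es ⟨0, ht⟩)).card) →
      ∀ Z : Finset L, (∀ i j, i ≠ j → φ (es i) ∩ φ (es j) = Z) →
      (∀ e, T.EOnPath a b e → (φ (es ⟨0, ht⟩)).card ≤ (φ e).card) →
      (∀ e, T.EOnPath a b e → (φ e).card = (φ (es ⟨0, ht⟩)).card →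
        ¬ τm e ⊆ Z ∧ μ e = μ (es ⟨0, ht⟩)) →
      t ≤ m)

/-- A stable set in a (possibly infinite) graph. -/
def StableIn {V : Type} (D : SimpleGraph V) (S : Set V) : Prop :=
  ∀ x ∈ S, ∀ y ∈ S, ¬ D.Adj x y

/-- A set of vertices of an infinite graph is rich if no infinite subset of it is stable. -/
def RichIn {V : Type} (D : SimpleGraph V) (I : Set V) : Prop :=
  ∀ J : Set V, J ⊆ I → J.Infinite → ¬ StableIn D J

end
noncomputable section

universe u

/-- A march in `G`: a sequence of distinct vertices, each entry carrying an
essential number in `{0, 1, 2}`. -/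
def March (G : MGraph) : Type := {l : List (G.V × Fin 3) // (l.map Prod.fst).Nodup}

/-- The rooted extension of the rooted graph `(G, γ)`. -/
def MGraph.rext (G : MGraph) (γ : March G) : MGraph where
  V := G.V ⊕ Fin γ.1.length
  E := G.E ⊕ (Σ i : Fin γ.1.length, Fin ((γ.1.get i).2 : ℕ))
  ends := fun e =>
    match e with
    | Sum.inl e => (G.ends e).map Sum.inl
    | Sum.inr x => s(Sum.inl (γ.1.get x.1).1, Sum.inr x.1)

/-- A homeomorphic embedding between rooted graphs. -/
structure RHom (G₁ G₂ : MGraph) (γ₁ : March G₁) (γ₂ : March G₂) where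
  hlen : γ₁.1.length = γ₂.1.length
  emb : MGraph.HomEmb (G₁.rext γ₁) (G₂.rext γ₂)
  ind : ∀ i : Fin γ₁.1.length,
    emb.vmap (Sum.inr i) = Sum.inr (Fin.cast hlen i)
  int_cond : ∀ (i : Fin γ₂.1.length) (e : (G₁.rext γ₁).E),
    (Sum.inl (γ₂.1.get i).1 : (G₂.rext γ₂).V) ∈ (emb.emap e).internalVerts →
    ((Sum.inr (Fin.cast hlen.symm i) : (G₁.rext γ₁).V) ∈ (G₁.rext γ₁).ends e ∨
     ((γ₁.1.get (Fin.cast hlen.symm i)).2 = 0 ∧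
      (Sum.inl (γ₁.1.get (Fin.cast hlen.symm i)).1 : (G₁.rext γ₁).V) ∈ (G₁.rext γ₁).ends e))
  pre_cond : ∀ (i : Fin γ₂.1.length) (v : (G₁.rext γ₁).V),
    emb.vmap v = Sum.inl (γ₂.1.get i).1 → v = Sum.inl (γ₁.1.get (Fin.cast hlen.symm i)).1

/-- A `Q`-assemblage: a rooted graph, a finite (indexed) multiset of marches,
a `Q`-label for each march and a `Q`-label for each vertex. -/
structure QA (Q : Type u) (le : Q → Q → Prop) : Type (max 1 u) where
  G : MGraph
  γ0 : March G
  ι : Type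
  [fι : Fintype ι]
  mar : ι → March G
  lab : ι → Q
  φ : G.V → Q

attribute [instance] QA.fι

/-- Simulation of `Q`-assemblages. -/
def Sim {Q : Type u} (le : Q → Q → Prop) (S S' : QA Q le) : Prop :=
  ∃ (η : RHom S.G S'.G S.γ0 S'.γ0) (j : S.ι → S'.ι),
    Function.Injective j ∧
    (∀ v : S.G.V, ∃ v' : S'.G.V,
      η.emb.vmap (Sum.inl v) = Sum.inl v' ∧ le (S.φ v) (S'.φ v')) ∧
    (∀ i, le (S.lab i) (S'.lab (j i))) ∧
    ∀ i, ((S.mar i).1.map fun p => η.emb.vmap (Sum.inl p.1)) =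
         ((S'.mar (j i)).1.map fun p => (Sum.inl p.1 : (S'.G.rext S'.γ0).V))

/-- An assemblage (the underlying assemblage of a `Q`-assemblage). -/
structure Asmb : Type 1 where
  G : MGraph
  γ0 : March G
  ι : Type
  [fι : Fintype ι]
  mar : ι → March G

attribute [instance] Asmb.fι

/-- The underlying assemblage. -/
def QA.und {Q : Type u} {le : Q → Q → Prop} (S : QA Q le) : Asmb :=
  { G := S.G, γ0 := S.γ0, ι := S.ι, mar := S.mar }

/-- `le` is a well-quasi-ordering of `Q`. -/
def IsWQORel {Q : Type u} (le : Q → Q → Prop) : Prop :=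
  (∀ a, le a a) ∧ (∀ a b c, le a b → le b c → le a c) ∧
  ∀ f : ℕ → Q, ∃ i j : ℕ, i < j ∧ le (f i) (f j)

/-- A set of assemblages is well-behaved. -/
def WellBehaved (F : Set Asmb) : Prop :=
  ∀ (Q : Type) (le : Q → Q → Prop), IsWQORel le →
    ∀ S : ℕ → QA Q le, (∀ i, (S i).und ∈ F) →
    ∃ i i' : ℕ, i < i' ∧ Sim le (S i) (S i')

/-- A rooted tree-decomposition of an assemblage. -/
structure ATD (A : Asmb) where
  D : RootedTD A.G
  root_bag : ∀ p ∈ A.γ0.1, p.1 ∈ D.bag D.root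
  α : A.ι → D.τ
  mar_bag : ∀ i : A.ι, ∀ p ∈ (A.mar i).1, p.1 ∈ D.bag (α i)

/-- The adhesion of a rooted tree-decomposition of an assemblage is at most `h`. -/
def AdhesionLE (A : Asmb) (T : ATD A) (h : ℕ) : Prop :=
  ∀ t : T.D.τ, t ≠ T.D.root → (T.D.bag t ∩ T.D.bag (T.D.parent t)).ncard ≤ h

/-- The essential number of the vertex `v` in the root march `γ_t` of the branch at `t`. -/
def essNum (A : Asmb) (T : ATD A) (t : T.D.τ) (v : A.G.V) : Fin 3 :=
  if (∀ i : A.ι, ¬ IterAnc T.D.parent t (T.α i) → ∀ p ∈ (A.mar i).1, p.1 ≠ v) ∧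
     (A.G.edgesFromTo v (Set.univ \ T.D.up t)).ncard = 0 ∧
     (∀ p ∈ A.γ0.1, p.1 = v → p.2 = 0)
  then 0
  else if (∀ i : A.ι, ¬ IterAnc T.D.parent t (T.α i) → ∀ p ∈ (A.mar i).1, p.1 ≠ v) ∧
     (((A.G.edgesFromTo v (Set.univ \ T.D.up t)).ncard = 1 ∧
        (∀ p ∈ A.γ0.1, p.1 = v → p.2 = 0)) ∨
      ((A.G.edgesFromTo v (Set.univ \ T.D.up t)).ncard = 0 ∧
        ∃ p ∈ A.γ0.1, p.1 = v ∧ p.2 = 1))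
  then 1 else 2

/-- The list of vertex/essential-number pairs of the march `γ_t`, with respect to
an ordering list `l` of `X_t ∩ X_{parent t}`. -/
def gammaList (A : Asmb) (T : ATD A) (t : T.D.τ) (l : List A.G.V) :
    List (A.G.V × Fin 3) :=
  l.map fun v => (v, essNum A T t v)

theorem gammaList_fst (A : Asmb) (T : ATD A) (t : T.D.τ) (l : List A.G.V) :
    (gammaList A T t l).map Prod.fst = l := by
  simp only [gammaList, List.map_map]
  exact List.map_congr_left (fun a _ => rfl) |>.trans (List.map_id _)

/-- `l` is an ordering of (an enumeration of) the finite set `X`. -/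
def IsOrdering {γ : Type} (l : List γ) (X : Set γ) : Prop :=
  l.Nodup ∧ ∀ v, v ∈ l ↔ v ∈ X

theorem coerce_nodup {G : MGraph} (S : Set G.V) :
    ∀ (l : List (G.V × Fin 3)) (H : ∀ p ∈ l, p.1 ∈ S),
      (l.map Prod.fst).Nodup →
      ((l.pmap (fun (p : G.V × Fin 3) (hp : p.1 ∈ S) => ((⟨p.1, hp⟩ : S), p.2)) H).map
        Prod.fst).Nodup := by
  intro l
  induction l with
  | nil => intro H h; simp [List.pmap]
  | cons a l ih =>
      intro H h
      simp only [List.map_cons, List.nodup_cons, List.pmap] at h ⊢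
      constructor
      · intro hmem
        simp only [List.mem_map, List.mem_pmap] at hmem
        obtain ⟨q, ⟨p, hp, rfl⟩, hval⟩ := hmem
        have h1 : p.1 = a.1 := congrArg Subtype.val hval
        exact h.1 (h1 ▸ List.mem_map_of_mem (f := Prod.fst) hp)
      · exact ih _ h.2

/-- Reinterpret a list of vertex/essential-number pairs as a march of an induced
subgraph. -/
def coerceMarch {G : MGraph} (S : Set G.V) (l : List (G.V × Fin 3))
    (hm : ∀ p ∈ l, p.1 ∈ S) (hnd : (l.map Prod.fst).Nodup) : March (G.induce S) :=
  ⟨l.pmap (fun (p : G.V × Fin 3) (hp : p.1 ∈ S) => ((⟨p.1, hp⟩ : S), p.2)) hm,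
    coerce_nodup S l hm hnd⟩

/-- The `(f, φ)`-branch of a rooted tree-decomposition of a `Q`-assemblage at a node `c`,
with respect to an ordering list `l` of `X_c ∩ X_{parent c}`. -/
def branchQA {Q : Type u} {le : Q → Q → Prop} (S : QA Q le) (T : ATD S.und) (c : T.D.τ)
    (l : List S.G.V) (hl : ∀ v ∈ l, v ∈ T.D.bag c) (hnd : l.Nodup) : QA Q le where
  G := S.G.induce (T.D.up c)
  γ0 := coerceMarch (T.D.up c) (gammaList S.und T c l)
    (by
      intro p hp
      simp only [gammaList, List.mem_map] at hp
      obtain ⟨v, hv, rfl⟩ := List.mem_map.mp hp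
      exact ⟨c, ⟨0, rfl⟩, hl v hv⟩)
    (by exact (congrArg List.Nodup (gammaList_fst S.und T c l)).mpr hnd)
  ι := {i : S.ι // IterAnc T.D.parent c (T.α i)}
  mar := fun i => coerceMarch (T.D.up c) (S.mar i.1).1
    (fun p hp => ⟨T.α i.1, i.2, T.mar_bag i.1 p hp⟩)
    (S.mar i.1).2
  lab := fun i => S.lab i.1
  φ := fun v => S.φ v.1

/-- The sequence `b_c` associated with a child `c` (with respect to an ordering
list `l` of `X_c ∩ X_{parent c}`). -/
def bseq (A : Asmb) (T : ATD A) (c : T.D.τ) (l : List A.G.V) : List Bool :=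
  l.map fun v =>
    if ∃ e : A.G.E, ∃ u, u ∈ T.D.up c ∧ u ∉ T.D.bag c ∩ T.D.bag (T.D.parent c) ∧
        A.G.ends e = s(v, u)
    then true else false

/-- The underlying assemblage of the encoding of a rooted tree-decomposition of an
assemblage at a node `t`. -/
def encU (A : Asmb) (T : ATD A) (t : T.D.τ)
    (lt : List A.G.V)
    (hlt : t ≠ T.D.root → IsOrdering lt (T.D.bag t ∩ T.D.bag (T.D.parent t)))
    (lc : T.D.τ → List A.G.V)
    (hlc : ∀ c, T.D.ChildOf c t → IsOrdering (lc c) (T.D.bag c ∩ T.D.bag t)) : Asmb where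
  G := A.G.induce (T.D.bag t)
  γ0 :=
    if h : t = T.D.root
    then coerceMarch (T.D.bag t) A.γ0.1 (fun p hp => by rw [h]; exact T.root_bag p hp)
      A.γ0.2
    else coerceMarch (T.D.bag t) (gammaList A T t lt)
      (by
        intro p hp
        simp only [gammaList, List.mem_map] at hp
        obtain ⟨v, hv, rfl⟩ := hp
        exact (((hlt h).2 v).mp hv).1)
      (by rw [gammaList_fst]; exact (hlt h).1)
  ι := {c : T.D.τ // T.D.ChildOf c t} ⊕ {i : A.ι // T.α i = t}
  mar := fun x =>
    match x with
    | Sum.inl c => coerceMarch (T.D.bag t) (gammaList A T c.1 (lc c.1))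
        (by
          intro p hp
          simp only [gammaList, List.mem_map] at hp
          obtain ⟨v, hv, rfl⟩ := hp
          exact (((hlc c.1 c.2).2 v).mp hv).2)
        (by rw [gammaList_fst]; exact (hlc c.1 c.2).1)
    | Sum.inr i => coerceMarch (T.D.bag t) (A.mar i.1).1
        (fun p hp => by rw [← i.2]; exact T.mar_bag i.1 p hp)
        (A.mar i.1).2

/-- The order relation on the labels of an encoding: the disjoint union of `le` with
(simulation × equality). -/
def encRel {Q : Type u} (le : Q → Q → Prop) :
    (Q ⊕ (QA Q le × List Bool)) → (Q ⊕ (QA Q le × List Bool)) → Prop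
  | Sum.inl a, Sum.inl b => le a b
  | Sum.inr a, Sum.inr b => Sim le a.1 b.1 ∧ a.2 = b.2
  | _, _ => False

/-- The encoding of a rooted tree-decomposition of a `Q`-assemblage at a node `t`. -/
def encQ {Q : Type u} {le : Q → Q → Prop} (S : QA Q le) (T : ATD S.und) (t : T.D.τ)
    (lt : List S.G.V)
    (hlt : t ≠ T.D.root → IsOrdering lt (T.D.bag t ∩ T.D.bag (T.D.parent t)))
    (lc : T.D.τ → List S.G.V)
    (hlc : ∀ c, T.D.ChildOf c t → IsOrdering (lc c) (T.D.bag c ∩ T.D.bag t)) :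
    QA (Q ⊕ (QA Q le × List Bool)) (encRel le) where
  G := S.G.induce (T.D.bag t)
  γ0 := (encU S.und T t lt hlt lc hlc).γ0
  ι := {c : T.D.τ // T.D.ChildOf c t} ⊕ {i : S.ι // T.α i = t}
  mar := fun x => (encU S.und T t lt hlt lc hlc).mar x
  lab := fun x =>
    match x with
    | Sum.inl c => Sum.inr
        (branchQA S T c.1 (lc c.1)
          (fun v hv => (((hlc c.1 c.2).2 v).mp hv).1)
          ((hlc c.1 c.2).1),
         bseq S.und T c.1 (lc c.1))
    | Sum.inr i => Sum.inl (S.lab i.1)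
  φ := fun v => Sum.inl (S.φ v.1)

/-- `T` is an `N`-unimpeded rooted tree-decomposition of the assemblage `A`. -/
def Unimpeded (A : Asmb) (T : ATD A) (N : ℕ) : Prop :=
  ∀ t : Fin (N+1) → T.D.τ,
    (∀ j, t j ≠ T.D.root) →
    (∀ j : Fin N, IterAnc T.D.parent (t j.castSucc) (T.D.parent (t j.succ))) →
    (∀ j j', j ≠ j' →
      T.D.bag (T.D.parent (t j)) ∩ T.D.bag (t j) ≠
      T.D.bag (T.D.parent (t j')) ∩ T.D.bag (t j')) →
    (∀ j j', (T.D.bag (T.D.parent (t j)) ∩ T.D.bag (t j)).ncard =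
      (T.D.bag (T.D.parent (t j')) ∩ T.D.bag (t j')).ncard) →
    (∀ u, EdgeOnPathP T.D.parent (T.D.parent (t 0)) (t (Fin.last N)) u →
      (T.D.bag (T.D.parent (t 0)) ∩ T.D.bag (t 0)).ncard ≤
      (T.D.bag (T.D.parent u) ∩ T.D.bag u).ncard) →
    A.G.LinkedSets ((T.D.bag (T.D.parent (t 0)) ∩ T.D.bag (t 0)).ncard)
      (T.D.bag (T.D.parent (t 0)) ∩ T.D.bag (t 0))
      (T.D.bag (T.D.parent (t 1)) ∩ T.D.bag (t 1))

section Realizer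

/-- The nodes of the node-realizer: the original nodes, a subdivision node for every
edge of the tree (identified with its head), and a new root. -/
def RPos {G : MGraph} (D : RootedTD G) : Type := (D.τ ⊕ {t : D.τ // t ≠ D.root}) ⊕ Unit

/-- The parent function of the node-realizer. -/
def rparent {G : MGraph} (D : RootedTD G) : RPos D → RPos D
  | Sum.inl (Sum.inl t) =>
      if h : t = D.root then Sum.inr () else Sum.inl (Sum.inr ⟨t, h⟩)
  | Sum.inl (Sum.inr s) => Sum.inl (Sum.inl (D.parent s.1))
  | Sum.inr _ => Sum.inr ()

/-- The bags of the node-realizer. -/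
def rbag (A : Asmb) (T : ATD A) : RPos T.D → Set A.G.V
  | Sum.inl (Sum.inl t) => T.D.bag t
  | Sum.inl (Sum.inr s) => T.D.bag s.1 ∩ T.D.bag (T.D.parent s.1)
  | Sum.inr _ => {v | ∃ p ∈ A.γ0.1, p.1 = v}

/-- A node of the node-realizer corresponds to a `Γ`-pseudo-edge-cut modulo `Z`. -/
def corrGPEC (A : Asmb) (T : ATD A) (Z : Set A.G.V) : RPos T.D → Prop
  | Sum.inl (Sum.inr s) =>
      ∀ v ∈ (T.D.bag s.1 ∩ T.D.bag (T.D.parent s.1)) \ Z, essNum A T s.1 v ≠ 2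
  | _ => False

/-- The `Γ`-elevation of the node-realizer of `T` is at most `d`. -/
def GammaElevLE (A : Asmb) (T : ATD A) (d : ℕ) : Prop :=
  ∀ (Z : Set A.G.V) (s : ℕ), 0 < s → ∀ (h : ℕ) (t : Fin (h+1) → RPos T.D),
    IsStripGen (rparent T.D) (rbag A T) (corrGPEC A T Z) Z s t → h + 1 ≤ d

end Realizer

/-- `T` is a rooted tree-decomposition over the family `F` of assemblages. -/
def OverFam (A : Asmb) (T : ATD A) (F : Set Asmb) : Prop :=
  ∀ (t : T.D.τ) (lt : List A.G.V)
    (hlt : t ≠ T.D.root → IsOrdering lt (T.D.bag t ∩ T.D.bag (T.D.parent t)))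
    (lc : T.D.τ → List A.G.V)
    (hlc : ∀ c, T.D.ChildOf c t → IsOrdering (lc c) (T.D.bag c ∩ T.D.bag t)),
    encU A T t lt hlt lc hlc ∈ F

/-- The assemblage `(G, ∅, ∅)`. -/
def emptyAsmb (G : MGraph) : Asmb where
  G := G
  γ0 := ⟨[], by simp⟩
  ι := Empty
  mar := fun i => i.elim

attribute [local instance] Classical.propDecidable

section PWOAux

/-- Pointwise order on `Option Q`. -/
def oLe {Q : Type} (le : Q → Q → Prop) : Option Q → Option Q → Prop
  | some a, some b => le a b
  | none, none => True
  | _, _ => False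

lemma oLe_refl {Q : Type} {le : Q → Q → Prop} (h : ∀ a, le a a) :
    ∀ x, oLe le x x := by rintro (_|a) <;> simp [oLe, h]

lemma oLe_trans {Q : Type} {le : Q → Q → Prop}
    (h : ∀ a b c, le a b → le b c → le a c) :
    ∀ x y z, oLe le x y → oLe le y z → oLe le x z := by
  rintro (_|a) (_|b) (_|c) h1 h2 <;> simp_all [oLe]
  exact h _ _ _ h1 h2

lemma pwo_option {Q : Type} {le : Q → Q → Prop}
    (h : ∀ f : ℕ → Q, ∃ i j, i < j ∧ le (f i) (f j)) :
    (Set.univ : Set (Option Q)).PartiallyWellOrderedOn (oLe le) := by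
  rw [Set.partiallyWellOrderedOn_iff_exists_lt]
  intro f _
  by_cases hinf : ∀ N : ℕ, ∃ m, N ≤ m ∧ f m = none
  · obtain ⟨m, _, hm'⟩ := hinf 0
    obtain ⟨m', hm'', hm'''⟩ := hinf (m + 1)
    exact ⟨m, m', by omega, by rw [hm', hm''']; trivial⟩
  · push_neg at hinf
    obtain ⟨N, hN⟩ := hinf
    have hv : ∀ k : ℕ, ∃ q, f (N + k) = some q := by
      intro k
      cases hfk : f (N + k) with
      | none => exact absurd hfk (hN _ (by omega))
      | some q => exact ⟨q, rfl⟩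
    choose g hg using hv
    obtain ⟨i, j, hij, hle⟩ := h g
    refine ⟨N + i, N + j, by omega, ?_⟩
    rw [hg i, hg j]; exact hle

lemma pwo_nat_le : (Set.univ : Set ℕ).PartiallyWellOrderedOn (· ≤ ·) := by
  rw [Set.partiallyWellOrderedOn_iff_exists_lt]
  intro f _
  obtain ⟨i, hi⟩ := (Nat.lt_wfRel.wf).has_min (Set.range fun k => f k) ⟨f 0, 0, rfl⟩
  obtain ⟨k, rfl⟩ := hi.1
  exact ⟨k, k + 1, by omega, not_lt.1 fun hlt => hi.2 _ ⟨k + 1, rfl⟩ hlt⟩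

lemma pwo_pi {ι : Type} [Fintype ι] {α : ι → Type} (r : ∀ i, α i → α i → Prop)
    (hrefl : ∀ i a, r i a a) (htrans : ∀ i a b c, r i a b → r i b c → r i a c)
    (h : ∀ i, (Set.univ : Set (α i)).PartiallyWellOrderedOn (r i)) :
    (Set.univ : Set (∀ i, α i)).PartiallyWellOrderedOn
      (fun f g => ∀ i, r i (f i) (g i)) := by
  suffices H : ∀ s : Finset ι, ∀ f : ℕ → ∀ i, α i,
      ∃ g : ℕ ↪o ℕ, ∀ a b : ℕ, a ≤ b → ∀ i ∈ s, r i (f (g a) i) (f (g b) i) by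
    rw [Set.partiallyWellOrderedOn_iff_exists_lt]
    intro f _
    obtain ⟨g, hg⟩ := H Finset.univ f
    exact ⟨g 0, g 1, g.strictMono Nat.zero_lt_one,
      fun i => hg 0 1 (by omega) i (Finset.mem_univ i)⟩
  intro s
  induction s using Finset.cons_induction with
  | empty => exact fun f => ⟨RelEmbedding.refl _, by simp⟩
  | cons x s hx ih =>
    intro f
    haveI : IsRefl (α x) (r x) := ⟨hrefl x⟩
    haveI : IsTrans (α x) (r x) := ⟨fun a b c => htrans x a b c⟩
    haveI : IsPreorder (α x) (r x) := {}
    obtain ⟨g, hg⟩ := (h x).exists_monotone_subseq (f := fun k => f k x)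
      (fun _ => Set.mem_univ _)
    obtain ⟨g', hg'⟩ := ih (fun k => f (g k))
    refine ⟨g'.trans g, fun a b hab i hi => ?_⟩
    rcases Finset.mem_cons.mp hi with rfl | hi
    · exact hg _ _ (g'.monotone hab)
    · exact hg' a b hab i hi

lemma list_map_eq_length {α β γ : Type*} {f : α → γ} {g : β → γ} {l1 : List α}
    {l2 : List β} (h : l1.map f = l2.map g) : l1.length = l2.length := by
  simpa using congrArg List.length h

lemma list_map_eq_get {α β γ : Type*} {f : α → γ} {g : β → γ} {l1 : List α}
    {l2 : List β} (h : l1.map f = l2.map g) (hl : l1.length = l2.length)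
    (p : Fin l1.length) : f (l1.get p) = g (l2.get (Fin.cast hl p)) := by
  have h2 := List.getElem_of_eq h (i := p.1) (by simpa using p.2)
  simpa using h2

end PWOAux
section SimConstruct

open MGraph

lemma sym2_exists_pair {α : Type*} (q : Sym2 α) : ∃ xy : α × α, q = s(xy.1, xy.2) :=
  Sym2.ind (fun x y => ⟨(x, y), rfl⟩) q

variable {Q : Type} {le : Q → Q → Prop}

lemma fin_cast_cast {m k : ℕ} (h : m = k) (i : Fin k) :
    Fin.cast h (Fin.cast h.symm i) = i := by
  apply Fin.ext; rfl

lemma sim_construct (Si Sj : QA Q le)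
    (β : Si.G.V ≃ Sj.G.V)
    (hγ : Si.γ0.1.map (fun p => (β p.1, p.2)) = Sj.γ0.1)
    (π : Si.G.E → Sj.G.E) (hπinj : Function.Injective π)
    (hπ : ∀ e, Sj.G.ends (π e) = Sym2.map β (Si.G.ends e))
    (jmap : Si.ι → Sj.ι) (hjinj : Function.Injective jmap)
    (hlab : ∀ x, le (Si.lab x) (Sj.lab (jmap x)))
    (hmar : ∀ x, (Si.mar x).1.map (fun p => (β p.1, p.2)) = (Sj.mar (jmap x)).1)
    (hφ : ∀ v, le (Si.φ v) (Sj.φ (β v))) :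
    Sim le Si Sj := by
  have hlen : Si.γ0.1.length = Sj.γ0.1.length := by
    simpa using congrArg List.length hγ
  -- pointwise facts about the root marches
  have hget : ∀ p : Fin Si.γ0.1.length,
      (β (Si.γ0.1.get p).1, (Si.γ0.1.get p).2) = Sj.γ0.1.get (Fin.cast hlen p) := by
    intro p
    have h2 := List.getElem_of_eq hγ (i := p.1) (by simpa using p.2)
    simpa using h2
  have hgetv : ∀ p : Fin Si.γ0.1.length,
      β (Si.γ0.1.get p).1 = (Sj.γ0.1.get (Fin.cast hlen p)).1 := by
    intro p; exact congrArg Prod.fst (hget p)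
  have hgete : ∀ p : Fin Si.γ0.1.length,
      ((Si.γ0.1.get p).2 : ℕ) = ((Sj.γ0.1.get (Fin.cast hlen p)).2 : ℕ) := by
    intro p; exact congrArg (fun x : Sj.G.V × Fin 3 => (x.2 : ℕ)) (hget p)
  -- the vertex map of the embedding between the rooted extensions
  set Gi' := Si.G.rext Si.γ0 with hGi'
  set Gj' := Sj.G.rext Sj.γ0 with hGj'
  let vmap : Gi'.V → Gj'.V := Sum.map β (Fin.cast hlen)
  have vinj : Function.Injective vmap :=
    Function.Injective.sumMap β.injective (Fin.cast_injective hlen)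
  -- the edge map
  let emap : Gi'.E → Gj'.E := fun e =>
    match e with
    | Sum.inl e => Sum.inl (π e)
    | Sum.inr x => Sum.inr ⟨Fin.cast hlen x.1, Fin.cast (hgete x.1) x.2⟩
  have einj : Function.Injective emap := by
    rintro (e | ⟨p, a⟩) (e' | ⟨p', a'⟩) h
    · exact congrArg Sum.inl (hπinj (Sum.inl.inj h))
    · exact absurd h (by simp [emap])
    · exact absurd h (by simp [emap])
    · have h' : (⟨Fin.cast hlen p, Fin.cast (hgete p) a⟩ :
          Σ i : Fin Sj.γ0.1.length, Fin ((Sj.γ0.1.get i).2 : ℕ)) =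
          ⟨Fin.cast hlen p', Fin.cast (hgete p') a'⟩ := Sum.inr.inj h
      have h1 : Fin.cast hlen p = Fin.cast hlen p' := congrArg (fun z => z.1) h'
      have hp : p = p' := Fin.cast_injective hlen h1
      subst hp
      have h2 : Fin.cast (hgete p) a = Fin.cast (hgete p) a' :=
        eq_of_heq (Sigma.mk.inj_iff.mp h').2
      rw [Fin.cast_injective _ h2]
  have key : ∀ e, Gj'.ends (emap e) = Sym2.map vmap (Gi'.ends e) := by
    rintro (e | ⟨p, a⟩)
    · show (Sj.G.ends (π e)).map Sum.inl = Sym2.map vmap ((Si.G.ends e).map Sum.inl)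
      rw [hπ e, Sym2.map_map]
      erw [Sym2.map_map]
      rfl
    · show s(Sum.inl (Sj.γ0.1.get (Fin.cast hlen p)).1, Sum.inr (Fin.cast hlen p))
        = Sym2.map vmap s(Sum.inl (Si.γ0.1.get p).1, Sum.inr p)
      erw [Sym2.map_pair_eq]
      have : vmap (Sum.inl (Si.γ0.1.get p).1) = Sum.inl (Sj.γ0.1.get (Fin.cast hlen p)).1 := by
        show Sum.inl (β (Si.γ0.1.get p).1) = _
        rw [hgetv p]
      rw [this]; rfl
  -- representative pairs for the ends of each edge
  have hout := fun (e : Gi'.E) => sym2_exists_pair (Gi'.ends e)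
  choose out hout using hout
  let esrc : Gi'.E → Gj'.V := fun e => vmap (out e).1
  let etgt : Gi'.E → Gj'.V := fun e => vmap (out e).2
  have hends : ∀ e, Gj'.ends (emap e) = s(esrc e, etgt e) := by
    intro e
    rw [key e, hout e, Sym2.map_pair_eq]
  let walk : ∀ e : Gi'.E, Gj'.Walk (esrc e) (etgt e) := fun e =>
    Walk.cons (emap e) (hends e) (Walk.nil (etgt e))
  have hvl : ∀ e, (walk e).vertList = [esrc e, etgt e] := by
    intro e; rfl
  have hel : ∀ e, (walk e).edgeList = [emap e] := by
    intro e; rfl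
  have hint : ∀ e, (walk e).internalVerts = [] := by
    intro e; rfl
  -- the homeomorphic embedding
  refine ⟨⟨hlen,
    { vmap := vmap
      vinj := vinj
      esrc := esrc
      etgt := etgt
      emap := walk
      ends_eq := by
        intro e
        rw [← hends e, key e, hout e]
      is_path := by
        intro e hd
        have hne : (out e).1 ≠ (out e).2 := by
          intro heq
          exact hd (by rw [hout e, Sym2.mk_isDiag_iff]; exact heq)
        show ((walk e).vertList).Nodup
        rw [hvl e]
        simp only [List.nodup_cons, List.mem_singleton, List.nodup_nil, and_true,
          List.not_mem_nil, not_false_iff]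
        exact fun h => hne (vinj h)
      is_cycle := by
        intro e hd
        have heq : (out e).1 = (out e).2 := by
          rw [hout e, Sym2.mk_isDiag_iff] at hd; exact hd
        refine ⟨congrArg vmap heq, by rw [hel e]; simp, by rw [hel e]; simp, ?_⟩
        rw [hvl e]; simp
      edge_disjoint := by
        intro e₁ e₂ _ x hx1 hx2
        rw [hvl e₁] at hx1; rw [hvl e₂] at hx2
        simp only [List.mem_cons, List.mem_singleton, List.not_mem_nil, or_false] at hx1 hx2
        have hmem : ∀ (e : Gi'.E) (w : Gi'.V), (w = (out e).1 ∨ w = (out e).2) →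
            w ∈ Gi'.ends e := by
          rintro e w (rfl | rfl) <;> rw [hout e]
          · exact Sym2.mem_mk_left _ _
          · exact Sym2.mem_mk_right _ _
        rcases hx1 with h1 | h1 <;> rcases hx2 with h2 | h2
        all_goals {
          refine ⟨_, h1.symm, hmem e₁ _ (by simp), ?_⟩
          have := vinj (h1.symm.trans h2)
          rw [this]
          exact hmem e₂ _ (by simp) }
      vert_cond := by
        intro v e hv
        rw [hvl e] at hv
        simp only [List.mem_cons, List.mem_singleton, List.not_mem_nil, or_false] at hv
        have : v = (out e).1 ∨ v = (out e).2 := by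
          rcases hv with h | h
          · exact Or.inl (vinj h)
          · exact Or.inr (vinj h)
        rcases this with rfl | rfl <;> rw [hout e]
        · exact Sym2.mem_mk_left _ _
        · exact Sym2.mem_mk_right _ _ },
    ?_, ?_, ?_⟩, jmap, hjinj, ?_, hlab, ?_⟩
  · intro i; rfl
  · intro i e h
    rw [hint e] at h
    exact absurd h List.not_mem_nil
  · intro i v hv
    match v with
    | Sum.inr x => exact absurd hv (by simp [vmap, Sum.map])
    | Sum.inl w =>
      have hv' : β w = (Sj.γ0.1.get i).1 := Sum.inl.inj hv
      have h2 := hgetv (Fin.cast hlen.symm i)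
      rw [fin_cast_cast hlen i] at h2
      have : w = (Si.γ0.1.get (Fin.cast hlen.symm i)).1 := β.injective (hv'.trans h2.symm)
      rw [this]
  · intro v
    exact ⟨β v, rfl, hφ v⟩
  · intro x
    have h1 := hmar x
    rw [← h1, List.map_map]
    rfl

end SimConstruct
lemma enum_get {γ : Type*} {m : ℕ} (f : Fin m → γ)
    (p : Fin ((List.finRange m).map f).length) :
    ((List.finRange m).map f).get p = f ⟨p.1, by simpa using p.2⟩ := by
  simp [List.getElem_map]

/-- Lemma 7.1: the assemblages on at most `n` vertices form a well-behaved family. -/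
theorem wellbehaved_bounded_size (n : ℕ) :
    WellBehaved {A : Asmb | Fintype.card A.G.V ≤ n} := by
  intro Q le hwqo S hS
  obtain ⟨hrefl, htrans, hseq⟩ := hwqo
  have hcard : ∀ i, Fintype.card (S i).G.V ≤ n := fun i => hS i
  -- vertex encodings into `Fin n`
  let enc : ∀ i, (S i).G.V → Fin n :=
    fun i v => Fin.castLE (hcard i) (Fintype.equivFin (S i).G.V v)
  have hencinj : ∀ i, Function.Injective (enc i) := fun i a b h =>
    (Fintype.equivFin (S i).G.V).injective (Fin.castLE_injective _ h)
  -- the code of each assemblage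
  let M := List (Fin n × Fin 3)
  let mr : M × Q → M × Q → Prop := fun a b => a.1 = b.1 ∧ le a.2 b.2
  let mc : ∀ i, March (S i).G → M := fun i γ => γ.1.map (fun p => (enc i p.1, p.2))
  let F : ∀ i, Fin (Fintype.card (S i).ι) → M × Q := fun i a =>
    (mc i ((S i).mar ((Fintype.equivFin (S i).ι).symm a)),
     (S i).lab ((Fintype.equivFin (S i).ι).symm a))
  let code : ∀ i : ℕ, ℕ × M × (Sym2 (Fin n) → ℕ) × (Fin n → Option Q) × List (M × Q) :=
    fun i =>
    (Fintype.card (S i).G.V,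
     mc i (S i).γ0,
     fun s => Fintype.card {e : (S i).G.E // ((S i).G.ends e).map (enc i) = s},
     fun m => (Function.partialInv (enc i) m).map (S i).φ,
     (List.finRange (Fintype.card (S i).ι)).map (F i))
  -- the partial well order on codes
  haveI iR : IsRefl (M × Q) mr := ⟨fun a => ⟨rfl, hrefl a.2⟩⟩
  haveI iT : IsTrans (M × Q) mr :=
    ⟨fun a b c h1 h2 => ⟨h1.1.trans h2.1, htrans _ _ _ h1.2 h2.2⟩⟩
  haveI : IsRefl (Sym2 (Fin n) → ℕ) (fun f g => ∀ s, f s ≤ g s) :=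
    ⟨fun _ _ => le_refl _⟩
  haveI : IsTrans (Sym2 (Fin n) → ℕ) (fun f g => ∀ s, f s ≤ g s) :=
    ⟨fun _ _ _ h1 h2 s => le_trans (h1 s) (h2 s)⟩
  haveI : IsRefl (Fin n → Option Q) (fun f g => ∀ m, oLe le (f m) (g m)) :=
    ⟨fun _ _ => oLe_refl hrefl _⟩
  haveI : IsTrans (Fin n → Option Q) (fun f g => ∀ m, oLe le (f m) (g m)) :=
    ⟨fun _ _ _ h1 h2 m => oLe_trans htrans _ _ _ (h1 m) (h2 m)⟩
  haveI : IsPreorder (M × Q) mr := {}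
  haveI : IsPreorder (Sym2 (Fin n) → ℕ) (fun f g => ∀ s, f s ≤ g s) := {}
  haveI : IsPreorder (Fin n → Option Q) (fun f g => ∀ m, oLe le (f m) (g m)) := {}
  haveI : IsPreorder ℕ (· = ·) := {}
  haveI : IsPreorder M (· = ·) := {}
  have pQ : (Set.univ : Set Q).PartiallyWellOrderedOn le :=
    Set.partiallyWellOrderedOn_iff_exists_lt.2 fun f _ => hseq f
  have p1 : (Set.Iic n).PartiallyWellOrderedOn (· = · : ℕ → ℕ → Prop) :=
    (Set.finite_Iic n).partiallyWellOrderedOn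
  have p2 : {l : M | l.length ≤ n}.PartiallyWellOrderedOn (· = ·) :=
    (List.finite_length_le (Fin n × Fin 3) n).partiallyWellOrderedOn
  have p3 : (Set.univ : Set (Sym2 (Fin n) → ℕ)).PartiallyWellOrderedOn
      (fun f g => ∀ s, f s ≤ g s) :=
    pwo_pi (fun _ => (· ≤ ·)) (fun _ a => le_refl a)
      (fun _ a b c h1 h2 => le_trans h1 h2) (fun _ => pwo_nat_le)
  have p4 : (Set.univ : Set (Fin n → Option Q)).PartiallyWellOrderedOn
      (fun f g => ∀ m, oLe le (f m) (g m)) :=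
    pwo_pi (fun _ => oLe le) (fun _ => oLe_refl hrefl)
      (fun _ => oLe_trans htrans) (fun _ => pwo_option hseq)
  have pbase : ({l : M | l.length ≤ n} ×ˢ (Set.univ : Set Q)).PartiallyWellOrderedOn mr :=
    p2.prod pQ
  have p5 := Set.PartiallyWellOrderedOn.partiallyWellOrderedOn_sublistForall₂ mr pbase
  have pbig := p1.prod (p2.prod (p3.prod (p4.prod p5)))
  -- lengths of marches are at most `n`
  have hmarlen : ∀ (i : ℕ) (γ : March (S i).G), (mc i γ).length ≤ n := by
    intro i γ
    have h1 : (γ.1.map Prod.fst).length ≤ Fintype.card (S i).G.V :=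
      γ.2.length_le_card
    simp only [mc, List.length_map] at h1 ⊢
    exact h1.trans (hcard i)
  have hmem : ∀ m : ℕ, code m ∈
      (Set.Iic n) ×ˢ ({l : M | l.length ≤ n} ×ˢ ((Set.univ : Set (Sym2 (Fin n) → ℕ)) ×ˢ
        ((Set.univ : Set (Fin n → Option Q)) ×ˢ
          {l : List (M × Q) | ∀ x, x ∈ l → x ∈ {l : M | l.length ≤ n} ×ˢ (Set.univ : Set Q)}))) := by
    intro m
    refine ⟨hcard m, hmarlen m _, trivial, trivial, ?_⟩
    intro x hx
    obtain ⟨a, _, rfl⟩ := List.mem_map.mp hx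
    exact ⟨hmarlen m _, trivial⟩
  obtain ⟨i, j, hij, hR⟩ := pbig.exists_lt (f := code) hmem
  obtain ⟨h1, h2, h3, h4, h5⟩ := hR
  refine ⟨i, j, hij, ?_⟩
  -- the vertex bijection
  let β : (S i).G.V ≃ (S j).G.V :=
    (Fintype.equivFin (S i).G.V).trans ((finCongr h1).trans (Fintype.equivFin (S j).G.V).symm)
  have hβ : ∀ v, enc j (β v) = enc i v := by
    intro v
    apply Fin.ext
    simp [enc, β, Fin.castLE]
  have hpairinj : ∀ k, Function.Injective (fun p : (S k).G.V × Fin 3 => (enc k p.1, p.2)) := by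
    intro k a b h
    simp only [Prod.mk.injEq] at h
    exact Prod.ext (hencinj k h.1) h.2
  have hstrip : ∀ (γ1 : March (S i).G) (γ2 : March (S j).G), mc i γ1 = mc j γ2 →
      γ1.1.map (fun p => (β p.1, p.2)) = γ2.1 := by
    intro γ1 γ2 hcode
    apply List.map_injective_iff.mpr (hpairinj j)
    rw [List.map_map]
    have : ((fun p : (S j).G.V × Fin 3 => (enc j p.1, p.2)) ∘ fun p : (S i).G.V × Fin 3 =>
        (β p.1, p.2)) = fun p => (enc i p.1, p.2) := by
      funext p
      simp only [Function.comp_apply]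
      rw [hβ]
    rw [this]
    exact hcode
  -- the edge injection
  have hemb : ∀ s : Sym2 (Fin n),
      Nonempty ({e : (S i).G.E // ((S i).G.ends e).map (enc i) = s} ↪
        {e : (S j).G.E // ((S j).G.ends e).map (enc j) = s}) :=
    fun s => Function.Embedding.nonempty_of_card_le (h3 s)
  let embF := fun s => (hemb s).some
  let mpd : (S i).G.E → Sym2 (Fin n) := fun e => ((S i).G.ends e).map (enc i)
  let π : (S i).G.E → (S j).G.E := fun e => (embF (mpd e) ⟨e, rfl⟩).1
  have key : ∀ e, ((S j).G.ends (π e)).map (enc j) = mpd e :=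
    fun e => (embF (mpd e) ⟨e, rfl⟩).2
  have hgen : ∀ (e' : (S i).G.E) (s : Sym2 (Fin n)) (h : mpd e' = s),
      (embF (mpd e') ⟨e', rfl⟩).1 = (embF s ⟨e', h⟩).1 := by
    intro e' s h
    cases h
    rfl
  have hπinj : Function.Injective π := by
    intro e e' h
    have hs : mpd e' = mpd e := by rw [← key e, ← key e', h]
    have h2 : (embF (mpd e) ⟨e, rfl⟩).1 = (embF (mpd e) ⟨e', hs⟩).1 := by
      rw [← hgen e' (mpd e) hs]
      exact h
    have := (embF (mpd e)).injective (Subtype.ext h2)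
    exact congrArg Subtype.val this
  have hπ : ∀ e, (S j).G.ends (π e) = Sym2.map β ((S i).G.ends e) := by
    intro e
    apply Sym2.map.injective (hencinj j)
    have h2 : Sym2.map (enc j) (Sym2.map β ((S i).G.ends e))
        = Sym2.map (enc i) ((S i).G.ends e) := by
      rw [Sym2.map_map]
      congr 1
      funext v
      exact hβ v
    rw [h2]
    exact key e
  -- the vertex labels
  have hφ : ∀ v, le ((S i).φ v) ((S j).φ (β v)) := by
    intro v
    have e1 : Option.map (S i).φ (Function.partialInv (enc i) (enc i v))
        = some ((S i).φ v) := by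
      rw [Function.partialInv_left (hencinj i)]
      rfl
    have e2 : Option.map (S j).φ (Function.partialInv (enc j) (enc i v))
        = some ((S j).φ (β v)) := by
      rw [← hβ v, Function.partialInv_left (hencinj j)]
      rfl
    have h : oLe le (Option.map (S i).φ (Function.partialInv (enc i) (enc i v)))
        (Option.map (S j).φ (Function.partialInv (enc j) (enc i v))) := h4 (enc i v)
    rw [e1, e2] at h
    exact h
  -- the index injection
  rw [List.sublistForall₂_iff] at h5
  obtain ⟨l, hf, hsub⟩ := h5
  rw [List.forall₂_iff_get] at hf
  obtain ⟨len1, hget5⟩ := hf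
  rw [List.sublist_iff_exists_fin_orderEmbedding_get_eq] at hsub
  obtain ⟨femb, hfemb⟩ := hsub
  have hLi : ((List.finRange (Fintype.card (S i).ι)).map (F i)).length
      = Fintype.card (S i).ι := by simp
  have hLj : ((List.finRange (Fintype.card (S j).ι)).map (F j)).length
      = Fintype.card (S j).ι := by simp
  let ix : (S i).ι → Fin ((List.finRange (Fintype.card (S i).ι)).map (F i)).length :=
    fun x => ⟨(Fintype.equivFin (S i).ι x).1, by
      rw [hLi]; exact (Fintype.equivFin (S i).ι x).2⟩
  let outp : (S i).ι → Fin ((List.finRange (Fintype.card (S j).ι)).map (F j)).length :=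
    fun x => femb (Fin.cast len1 (ix x))
  let jmap : (S i).ι → (S j).ι :=
    fun x => (Fintype.equivFin (S j).ι).symm ⟨(outp x).1, by
      have := (outp x).2; simpa using this⟩
  have hjinj : Function.Injective jmap := by
    intro x x' h
    have h1 : (outp x).1 = (outp x').1 := by
      have h0 := (Fintype.equivFin (S j).ι).symm.injective h
      simpa using congrArg Fin.val h0
    have h2 : outp x = outp x' := Fin.ext h1
    have h3 : Fin.cast len1 (ix x) = Fin.cast len1 (ix x') := femb.injective h2
    have h4' : ix x = ix x' := Fin.cast_injective len1 h3
    have h5' : Fintype.equivFin (S i).ι x = Fintype.equivFin (S i).ι x' :=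
      Fin.ext (by simpa using congrArg Fin.val h4')
    exact (Fintype.equivFin (S i).ι).injective h5'
  -- the key relation between corresponding indices
  have hmr : ∀ x : (S i).ι, mr (F i (Fintype.equivFin (S i).ι x))
      (F j (Fintype.equivFin (S j).ι (jmap x))) := by
    intro x
    have hx1 : ((List.finRange (Fintype.card (S i).ι)).map (F i)).get (ix x)
        = F i (Fintype.equivFin (S i).ι x) := by
      rw [enum_get]
    have h6 : mr (((List.finRange (Fintype.card (S i).ι)).map (F i)).get (ix x))
        (l.get (Fin.cast len1 (ix x))) := by
      exact hget5 (ix x).1 (ix x).2 ((Fin.cast len1 (ix x)).2)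
    rw [hfemb (Fin.cast len1 (ix x))] at h6
    have hx2 : ((List.finRange (Fintype.card (S j).ι)).map (F j)).get (outp x)
        = F j (Fintype.equivFin (S j).ι (jmap x)) := by
      rw [enum_get]
      congr 1
      exact ((Fintype.equivFin (S j).ι).apply_symm_apply _).symm
    rw [hx1, hx2] at h6
    exact h6
  have hlab : ∀ x, le ((S i).lab x) ((S j).lab (jmap x)) := by
    intro x
    have h := (hmr x).2
    simpa only [F, Equiv.symm_apply_apply] using h
  have hmar : ∀ x, ((S i).mar x).1.map (fun p => (β p.1, p.2)) = ((S j).mar (jmap x)).1 := by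
    intro x
    apply hstrip
    have h := (hmr x).1
    simpa only [F, Equiv.symm_apply_apply] using h
  have hγ : (S i).γ0.1.map (fun p => (β p.1, p.2)) = (S j).γ0.1 := hstrip _ _ h2
  exact sim_construct (S i) (S j) β hγ π hπinj hπ jmap hjinj hlab hmar hφ
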